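/- On the open set U = {(p,q,t) ∈ ℝ³ : q ≠ 0}, define the smooth functions π(p,q,t) = (p²+q²)/2, χ(p,q,t) = −t − arctan(p/q), and ψ(p,q,t) = −pq/2. Then for every x = (p,q,t) ∈ U and every v ∈ ℝ³: p·v_q − ((p²+q²)/2)·v_t = π(x)·(Dχ(x))(v) − (Dψ(x))(v), where Dχ(x) and Dψ(x) denote the Fréchet derivatives. That is, the harmonic oscillator contact form p dq − ((p²+q²)/2) dt equals π dχ − dψ on U. -/

import Mathlib

/-- On `U = {(p,q,t) : q ≠ 0}`, with `π = (p²+q²)/2`,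
`χ = -t - arctan(p/q)` and `ψ = -pq/2`, the harmonic oscillator contact form
`p dq - ((p²+q²)/2) dt` equals `π dχ - dψ`: for every `x ∈ U` and every tangent
vector `v`, `p v_q - ((p²+q²)/2) v_t = π(x) (Dχ(x))(v) - (Dψ(x))(v)`.
Points are modelled as `x : ℝ × ℝ × ℝ` with `x.1 = p`, `x.2.1 = q`, `x.2.2 = t`. -/
theorem harmonic_oscillator_darboux_form :
    ∀ x : ℝ × ℝ × ℝ, x.2.1 ≠ 0 → ∀ v : ℝ × ℝ × ℝ,
      x.1 * v.2.1 - ((x.1 ^ 2 + x.2.1 ^ 2) / 2) * v.2.2 =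
        ((x.1 ^ 2 + x.2.1 ^ 2) / 2) *
            fderiv ℝ (fun y : ℝ × ℝ × ℝ => -y.2.2 - Real.arctan (y.1 / y.2.1)) x v
          - fderiv ℝ (fun y : ℝ × ℝ × ℝ => -(y.1 * y.2.1) / 2) x v := by
  intro x hq v
  simp only [div_eq_mul_inv]
  have h1 : HasFDerivAt (fun y : ℝ × ℝ × ℝ => y.1)
      (ContinuousLinearMap.fst ℝ ℝ (ℝ × ℝ)) x := hasFDerivAt_fst
  have h2 : HasFDerivAt (fun y : ℝ × ℝ × ℝ => y.2.1)
      ((ContinuousLinearMap.fst ℝ ℝ ℝ).comp (ContinuousLinearMap.snd ℝ ℝ (ℝ × ℝ))) x :=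
    hasFDerivAt_fst.comp x hasFDerivAt_snd
  have h3 : HasFDerivAt (fun y : ℝ × ℝ × ℝ => y.2.2)
      ((ContinuousLinearMap.snd ℝ ℝ ℝ).comp (ContinuousLinearMap.snd ℝ ℝ (ℝ × ℝ))) x :=
    hasFDerivAt_snd.comp x hasFDerivAt_snd
  have hψ := ((h1.mul h2).neg).mul_const ((2:ℝ)⁻¹)
  have hinv := (hasDerivAt_inv hq).comp_hasFDerivAt x h2
  have hdiv := h1.mul hinv
  have harct := (Real.hasDerivAt_arctan (x.1 * x.2.1⁻¹)).comp_hasFDerivAt x hdiv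
  have hχ := (h3.neg).sub harct
  simp only [Function.comp_def] at hχ
  rw [HasFDerivAt.fderiv (f := fun y : ℝ × ℝ × ℝ => -y.2.2 - Real.arctan (y.1 * y.2.1⁻¹)) hχ,
    HasFDerivAt.fderiv (f := fun y : ℝ × ℝ × ℝ => -(y.1 * y.2.1) * 2⁻¹) hψ]
  have hx : (1 : ℝ) + (x.1 * x.2.1⁻¹) ^ 2 ≠ 0 := by positivity
  simp [ContinuousLinearMap.smulRight_apply, ContinuousLinearMap.smul_apply,
    ContinuousLinearMap.sub_apply, ContinuousLinearMap.comp_apply, smul_eq_mul]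
  field_simp
  ring
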